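/- Suppose there exist C¹ functions P, Q, R, A, B : ℝ⁵ → ℂ such that, for every smooth f : ℝ⁵ → ℂ, [L, S] f = P·(T f) + Q·(S f) + R·(S̄ f) and [L̄, S] f = A·(T f) + B·(S f) + conj(B)·(S̄ f). Then for every smooth f: [T, S] f = E·(T f) + F·(S f) + G·(S̄ f), where E := i·( L(A) − L̄(P) + A·conj(B) + B·P − A·Q − conj(P)·R ), F := i·( L(B) − L̄(Q) + A + B·conj(B) − R·conj(R) ), and G := i·( L(conj(B)) − L̄(R) + conj(B)² + B·R − P − conj(B)·Q − R·conj(Q) ). (This is the paper's Lemma computing the coefficients E, F, G of [T, S] for General Class III₁.) -/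

import Mathlib

noncomputable section
open Complex ComplexConjugate

/-- Points of `ℝ⁵`, with coordinates `(x, y, u₁, u₂, u₃)` and `z = x + i y`. -/
abbrev V5 := Fin 5 → ℝ

/-- Partial derivative in the `j`-th coordinate direction. -/
def pd (j : Fin 5) (f : V5 → ℂ) : V5 → ℂ := fun p => fderiv ℝ f p (Pi.single j 1)

/-- Wirtinger derivative `f_z := (f_x − i f_y)/2`. -/
def wz (f : V5 → ℂ) : V5 → ℂ := fun p => (pd 0 f p - I * pd 1 f p) / 2

/-- Wirtinger derivative `f_z̄ := (f_x + i f_y)/2`. -/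
def wzb (f : V5 → ℂ) : V5 → ℂ := fun p => (pd 0 f p + I * pd 1 f p) / 2

variable (a₁ a₂ a₃ : V5 → ℂ)

/-- The operator `L f := f_z + a₁ f_{u₁} + a₂ f_{u₂} + a₃ f_{u₃}`. -/
def Lop (f : V5 → ℂ) : V5 → ℂ := fun p =>
  wz f p + a₁ p * pd 2 f p + a₂ p * pd 3 f p + a₃ p * pd 4 f p

/-- The operator `L̄ f := f_z̄ + ā₁ f_{u₁} + ā₂ f_{u₂} + ā₃ f_{u₃}`. -/
def Lbop (f : V5 → ℂ) : V5 → ℂ := fun p =>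
  wzb f p + conj (a₁ p) * pd 2 f p + conj (a₂ p) * pd 3 f p + conj (a₃ p) * pd 4 f p

/-- The operator `T := i·[L, L̄]`. -/
def Tof (f : V5 → ℂ) : V5 → ℂ := fun p =>
  I * (Lop a₁ a₂ a₃ (Lbop a₁ a₂ a₃ f) p - Lbop a₁ a₂ a₃ (Lop a₁ a₂ a₃ f) p)

/-- The operator `S := [L, T]`. -/
def Sof (f : V5 → ℂ) : V5 → ℂ := fun p =>
  Lop a₁ a₂ a₃ (Tof a₁ a₂ a₃ f) p - Tof a₁ a₂ a₃ (Lop a₁ a₂ a₃ f) p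

/-- The operator `S̄ := [L̄, T]`. -/
def Sbof (f : V5 → ℂ) : V5 → ℂ := fun p =>
  Lbop a₁ a₂ a₃ (Tof a₁ a₂ a₃ f) p - Tof a₁ a₂ a₃ (Lbop a₁ a₂ a₃ f) p

/-! ### Auxiliary lemmas -/

section AuxBasic

lemma one_le_inftop : (1 : WithTop ℕ∞) ≤ ((⊤ : ℕ∞) : WithTop ℕ∞) := by
  exact_mod_cast (le_top : (1:ℕ∞) ≤ ⊤)

lemma inftop_add_one_le : ((⊤ : ℕ∞) : WithTop ℕ∞) + 1 ≤ ((⊤ : ℕ∞) : WithTop ℕ∞) := le_rfl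

lemma diff_of_top {f : V5 → ℂ} (hf : ContDiff ℝ (⊤:ℕ∞) f) : Differentiable ℝ f :=
  hf.differentiable (by simp)

lemma contDiff_pd {f : V5 → ℂ} (hf : ContDiff ℝ (⊤:ℕ∞) f) (j : Fin 5) :
    ContDiff ℝ (⊤:ℕ∞) (pd j f) :=
  (hf.fderiv_right inftop_add_one_le).clm_apply contDiff_const

lemma contDiff_conj {g : V5 → ℂ} (hg : ContDiff ℝ (⊤:ℕ∞) g) :
    ContDiff ℝ (⊤:ℕ∞) (fun q => conj (g q)) := by
  have h : ContDiff ℝ (⊤:ℕ∞) (fun q => Complex.conjCLE (g q)) :=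
    (Complex.conjCLE : ℂ ≃L[ℝ] ℂ).toContinuousLinearMap.contDiff.comp hg
  simpa [Complex.conjCLE_apply] using h

lemma diff_conj {g : V5 → ℂ} (hg : Differentiable ℝ g) :
    Differentiable ℝ (fun q => conj (g q)) := by
  simpa [← starRingEnd_apply] using hg.star

variable {g h : V5 → ℂ}

lemma pd_add (hg : Differentiable ℝ g) (hh : Differentiable ℝ h) (j : Fin 5) (p : V5) :
    pd j (fun q => g q + h q) p = pd j g p + pd j h p := by
  unfold pd; rw [fderiv_fun_add (hg p) (hh p)]; simp

lemma pd_sub (hg : Differentiable ℝ g) (hh : Differentiable ℝ h) (j : Fin 5) (p : V5) :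
    pd j (fun q => g q - h q) p = pd j g p - pd j h p := by
  unfold pd; rw [fderiv_fun_sub (hg p) (hh p)]; simp

lemma pd_cmul (c : ℂ) (hg : Differentiable ℝ g) (j : Fin 5) (p : V5) :
    pd j (fun q => c * g q) p = c * pd j g p := by
  unfold pd; rw [fderiv_const_mul (hg p) c]; simp

lemma pd_mul (hg : Differentiable ℝ g) (hh : Differentiable ℝ h) (j : Fin 5) (p : V5) :
    pd j (fun q => g q * h q) p = pd j g p * h p + g p * pd j h p := by
  unfold pd; rw [fderiv_fun_mul (hg p) (hh p)]
  simp only [ContinuousLinearMap.add_apply, ContinuousLinearMap.smul_apply, smul_eq_mul]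
  ring

lemma pd_conj (hg : Differentiable ℝ g) (j : Fin 5) (p : V5) :
    pd j (fun q => conj (g q)) p = conj (pd j g p) := by
  unfold pd
  have e : (fun q => (conj (g q) : ℂ)) = fun q => star (g q) := rfl
  rw [e, fderiv_star]
  simp only [ContinuousLinearMap.coe_comp', Function.comp_apply, starRingEnd_apply]
  rfl

end AuxBasic

local notation "𝐋" => Lop a₁ a₂ a₃
local notation "𝐋b" => Lbop a₁ a₂ a₃
local notation "𝐓" => Tof a₁ a₂ a₃
local notation "𝐒" => Sof a₁ a₂ a₃
local notation "𝐒b" => Sbof a₁ a₂ a₃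

section AuxOps

variable {a₁ a₂ a₃}

variable {g h x y g₀ c₁ h₁ c₂ h₂ c₃ h₃ : V5 → ℂ}

lemma contDiff_Lop (ha₁ : ContDiff ℝ (⊤:ℕ∞) a₁) (ha₂ : ContDiff ℝ (⊤:ℕ∞) a₂)
    (ha₃ : ContDiff ℝ (⊤:ℕ∞) a₃) {f : V5 → ℂ} (hf : ContDiff ℝ (⊤:ℕ∞) f) :
    ContDiff ℝ (⊤:ℕ∞) (𝐋 f) := by
  unfold Lop wz
  exact ((((contDiff_pd hf 0).sub (contDiff_const.mul (contDiff_pd hf 1))).div_const 2).add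
    (ha₁.mul (contDiff_pd hf 2))).add ((ha₂.mul (contDiff_pd hf 3))) |>.add
    (ha₃.mul (contDiff_pd hf 4))

lemma contDiff_Lbop (ha₁ : ContDiff ℝ (⊤:ℕ∞) a₁) (ha₂ : ContDiff ℝ (⊤:ℕ∞) a₂)
    (ha₃ : ContDiff ℝ (⊤:ℕ∞) a₃) {f : V5 → ℂ} (hf : ContDiff ℝ (⊤:ℕ∞) f) :
    ContDiff ℝ (⊤:ℕ∞) (𝐋b f) := by
  unfold Lbop wzb
  exact ((((contDiff_pd hf 0).add (contDiff_const.mul (contDiff_pd hf 1))).div_const 2).add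
    ((contDiff_conj ha₁).mul (contDiff_pd hf 2))).add ((contDiff_conj ha₂).mul
    (contDiff_pd hf 3)) |>.add ((contDiff_conj ha₃).mul (contDiff_pd hf 4))

lemma contDiff_Tof (ha₁ : ContDiff ℝ (⊤:ℕ∞) a₁) (ha₂ : ContDiff ℝ (⊤:ℕ∞) a₂)
    (ha₃ : ContDiff ℝ (⊤:ℕ∞) a₃) {f : V5 → ℂ} (hf : ContDiff ℝ (⊤:ℕ∞) f) :
    ContDiff ℝ (⊤:ℕ∞) (𝐓 f) := by
  unfold Tof
  exact contDiff_const.mul ((contDiff_Lop ha₁ ha₂ ha₃ (contDiff_Lbop ha₁ ha₂ ha₃ hf)).sub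
    (contDiff_Lbop ha₁ ha₂ ha₃ (contDiff_Lop ha₁ ha₂ ha₃ hf)))

lemma contDiff_Sof (ha₁ : ContDiff ℝ (⊤:ℕ∞) a₁) (ha₂ : ContDiff ℝ (⊤:ℕ∞) a₂)
    (ha₃ : ContDiff ℝ (⊤:ℕ∞) a₃) {f : V5 → ℂ} (hf : ContDiff ℝ (⊤:ℕ∞) f) :
    ContDiff ℝ (⊤:ℕ∞) (𝐒 f) := by
  unfold Sof
  exact (contDiff_Lop ha₁ ha₂ ha₃ (contDiff_Tof ha₁ ha₂ ha₃ hf)).sub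
    (contDiff_Tof ha₁ ha₂ ha₃ (contDiff_Lop ha₁ ha₂ ha₃ hf))

lemma contDiff_Sbof (ha₁ : ContDiff ℝ (⊤:ℕ∞) a₁) (ha₂ : ContDiff ℝ (⊤:ℕ∞) a₂)
    (ha₃ : ContDiff ℝ (⊤:ℕ∞) a₃) {f : V5 → ℂ} (hf : ContDiff ℝ (⊤:ℕ∞) f) :
    ContDiff ℝ (⊤:ℕ∞) (𝐒b f) := by
  unfold Sbof
  exact (contDiff_Lbop ha₁ ha₂ ha₃ (contDiff_Tof ha₁ ha₂ ha₃ hf)).sub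
    (contDiff_Tof ha₁ ha₂ ha₃ (contDiff_Lbop ha₁ ha₂ ha₃ hf))

lemma Lop_add (hg : Differentiable ℝ g) (hh : Differentiable ℝ h) (p : V5) :
    𝐋 (fun q => g q + h q) p = 𝐋 g p + 𝐋 h p := by
  simp only [Lop, wz, pd_add hg hh]; ring

lemma Lop_sub (hg : Differentiable ℝ g) (hh : Differentiable ℝ h) (p : V5) :
    𝐋 (fun q => g q - h q) p = 𝐋 g p - 𝐋 h p := by
  simp only [Lop, wz, pd_sub hg hh]; ring

lemma Lop_comb2 (c : ℂ) (hg : Differentiable ℝ g) (hh : Differentiable ℝ h) (p : V5) :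
    𝐋 (fun q => g q + c * h q) p = 𝐋 g p + c * 𝐋 h p := by
  simp only [Lop, wz, pd_add hg (hh.const_mul c), pd_cmul c hh]; ring

lemma Lop_comb2' (c d : ℂ) (hg : Differentiable ℝ g) (hh : Differentiable ℝ h) (p : V5) :
    𝐋 (fun q => c * g q + d * h q) p = c * 𝐋 g p + d * 𝐋 h p := by
  simp only [Lop, wz, pd_add (hg.const_mul c) (hh.const_mul d), pd_cmul c hg, pd_cmul d hh]; ring

lemma Lbop_add (hg : Differentiable ℝ g) (hh : Differentiable ℝ h) (p : V5) :
    𝐋b (fun q => g q + h q) p = 𝐋b g p + 𝐋b h p := by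
  simp only [Lbop, wzb, pd_add hg hh]; ring

lemma Lbop_sub (hg : Differentiable ℝ g) (hh : Differentiable ℝ h) (p : V5) :
    𝐋b (fun q => g q - h q) p = 𝐋b g p - 𝐋b h p := by
  simp only [Lbop, wzb, pd_sub hg hh]; ring

lemma Lbop_comb2 (c : ℂ) (hg : Differentiable ℝ g) (hh : Differentiable ℝ h) (p : V5) :
    𝐋b (fun q => g q + c * h q) p = 𝐋b g p + c * 𝐋b h p := by
  simp only [Lbop, wzb, pd_add hg (hh.const_mul c), pd_cmul c hh]; ring

lemma Lbop_comb2' (c d : ℂ) (hg : Differentiable ℝ g) (hh : Differentiable ℝ h) (p : V5) :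
    𝐋b (fun q => c * g q + d * h q) p = c * 𝐋b g p + d * 𝐋b h p := by
  simp only [Lbop, wzb, pd_add (hg.const_mul c) (hh.const_mul d), pd_cmul c hg, pd_cmul d hh]; ring

lemma Lop_comb4 (hg₀ : Differentiable ℝ g₀) (hc₁ : Differentiable ℝ c₁)
    (hh₁ : Differentiable ℝ h₁) (hc₂ : Differentiable ℝ c₂) (hh₂ : Differentiable ℝ h₂)
    (hc₃ : Differentiable ℝ c₃) (hh₃ : Differentiable ℝ h₃) (p : V5) :
    𝐋 (fun q => g₀ q + c₁ q * h₁ q + c₂ q * h₂ q + c₃ q * h₃ q) p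
      = 𝐋 g₀ p + (𝐋 c₁ p * h₁ p + c₁ p * 𝐋 h₁ p) + (𝐋 c₂ p * h₂ p + c₂ p * 𝐋 h₂ p)
        + (𝐋 c₃ p * h₃ p + c₃ p * 𝐋 h₃ p) := by
  simp only [Lop, wz,
    pd_add (g := fun q => g₀ q + c₁ q * h₁ q + c₂ q * h₂ q) (h := fun q => c₃ q * h₃ q) ((hg₀.add (hc₁.mul hh₁)).add (hc₂.mul hh₂)) (hc₃.mul hh₃),
    pd_add (g := fun q => g₀ q + c₁ q * h₁ q) (h := fun q => c₂ q * h₂ q) (hg₀.add (hc₁.mul hh₁)) (hc₂.mul hh₂),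
    pd_add (g := g₀) (h := fun q => c₁ q * h₁ q) hg₀ (hc₁.mul hh₁),
    pd_mul hc₁ hh₁, pd_mul hc₂ hh₂, pd_mul hc₃ hh₃]
  ring

lemma Lbop_comb4 (hg₀ : Differentiable ℝ g₀) (hc₁ : Differentiable ℝ c₁)
    (hh₁ : Differentiable ℝ h₁) (hc₂ : Differentiable ℝ c₂) (hh₂ : Differentiable ℝ h₂)
    (hc₃ : Differentiable ℝ c₃) (hh₃ : Differentiable ℝ h₃) (p : V5) :
    𝐋b (fun q => g₀ q + c₁ q * h₁ q + c₂ q * h₂ q + c₃ q * h₃ q) p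
      = 𝐋b g₀ p + (𝐋b c₁ p * h₁ p + c₁ p * 𝐋b h₁ p) + (𝐋b c₂ p * h₂ p + c₂ p * 𝐋b h₂ p)
        + (𝐋b c₃ p * h₃ p + c₃ p * 𝐋b h₃ p) := by
  simp only [Lbop, wzb,
    pd_add (g := fun q => g₀ q + c₁ q * h₁ q + c₂ q * h₂ q) (h := fun q => c₃ q * h₃ q) ((hg₀.add (hc₁.mul hh₁)).add (hc₂.mul hh₂)) (hc₃.mul hh₃),
    pd_add (g := fun q => g₀ q + c₁ q * h₁ q) (h := fun q => c₂ q * h₂ q) (hg₀.add (hc₁.mul hh₁)) (hc₂.mul hh₂),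
    pd_add (g := g₀) (h := fun q => c₁ q * h₁ q) hg₀ (hc₁.mul hh₁),
    pd_mul hc₁ hh₁, pd_mul hc₂ hh₂, pd_mul hc₃ hh₃]
  ring

lemma Tof_add (ha₁ : ContDiff ℝ (⊤:ℕ∞) a₁) (ha₂ : ContDiff ℝ (⊤:ℕ∞) a₂)
    (ha₃ : ContDiff ℝ (⊤:ℕ∞) a₃) (hg : ContDiff ℝ (⊤:ℕ∞) g) (hh : ContDiff ℝ (⊤:ℕ∞) h)
    (p : V5) : 𝐓 (fun q => g q + h q) p = 𝐓 g p + 𝐓 h p := by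
  have e1 : 𝐋b (fun q => g q + h q) = fun q => 𝐋b g q + 𝐋b h q :=
    funext (Lbop_add (diff_of_top hg) (diff_of_top hh))
  have e2 : 𝐋 (fun q => g q + h q) = fun q => 𝐋 g q + 𝐋 h q :=
    funext (Lop_add (diff_of_top hg) (diff_of_top hh))
  simp only [Tof, e1, e2,
    Lop_add (diff_of_top (contDiff_Lbop ha₁ ha₂ ha₃ hg)) (diff_of_top (contDiff_Lbop ha₁ ha₂ ha₃ hh)),
    Lbop_add (diff_of_top (contDiff_Lop ha₁ ha₂ ha₃ hg)) (diff_of_top (contDiff_Lop ha₁ ha₂ ha₃ hh))]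
  ring

lemma Tof_comb2 (ha₁ : ContDiff ℝ (⊤:ℕ∞) a₁) (ha₂ : ContDiff ℝ (⊤:ℕ∞) a₂)
    (ha₃ : ContDiff ℝ (⊤:ℕ∞) a₃) (c : ℂ) (hg : ContDiff ℝ (⊤:ℕ∞) g)
    (hh : ContDiff ℝ (⊤:ℕ∞) h) (p : V5) :
    𝐓 (fun q => g q + c * h q) p = 𝐓 g p + c * 𝐓 h p := by
  have e1 : 𝐋b (fun q => g q + c * h q) = fun q => 𝐋b g q + c * 𝐋b h q :=
    funext (Lbop_comb2 c (diff_of_top hg) (diff_of_top hh))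
  have e2 : 𝐋 (fun q => g q + c * h q) = fun q => 𝐋 g q + c * 𝐋 h q :=
    funext (Lop_comb2 c (diff_of_top hg) (diff_of_top hh))
  simp only [Tof, e1, e2,
    Lop_comb2 c (diff_of_top (contDiff_Lbop ha₁ ha₂ ha₃ hg)) (diff_of_top (contDiff_Lbop ha₁ ha₂ ha₃ hh)),
    Lbop_comb2 c (diff_of_top (contDiff_Lop ha₁ ha₂ ha₃ hg)) (diff_of_top (contDiff_Lop ha₁ ha₂ ha₃ hh))]
  ring

lemma Lop_conj (hg : Differentiable ℝ g) (p : V5) :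
    𝐋 (fun q => conj (g q)) p = conj (𝐋b g p) := by
  simp only [Lop, Lbop, wz, wzb, pd_conj hg, map_add, map_sub, map_mul, map_div₀,
    Complex.conj_I, conj_conj, map_ofNat]
  ring

lemma Lbop_conj (hg : Differentiable ℝ g) (p : V5) :
    𝐋b (fun q => conj (g q)) p = conj (𝐋 g p) := by
  simp only [Lop, Lbop, wz, wzb, pd_conj hg, map_add, map_sub, map_mul, map_div₀,
    Complex.conj_I, conj_conj, map_ofNat]
  ring

lemma Tof_conj (ha₁ : ContDiff ℝ (⊤:ℕ∞) a₁) (ha₂ : ContDiff ℝ (⊤:ℕ∞) a₂)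
    (ha₃ : ContDiff ℝ (⊤:ℕ∞) a₃) (hg : ContDiff ℝ (⊤:ℕ∞) g) (p : V5) :
    𝐓 (fun q => conj (g q)) p = conj (𝐓 g p) := by
  have e1 : 𝐋b (fun q => conj (g q)) = fun q => conj (𝐋 g q) :=
    funext (Lbop_conj (diff_of_top hg))
  have e2 : 𝐋 (fun q => conj (g q)) = fun q => conj (𝐋b g q) :=
    funext (Lop_conj (diff_of_top hg))
  simp only [Tof, e1, e2,
    Lop_conj (diff_of_top (contDiff_Lop ha₁ ha₂ ha₃ hg)),
    Lbop_conj (diff_of_top (contDiff_Lbop ha₁ ha₂ ha₃ hg)),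
    map_mul, map_sub, Complex.conj_I]
  ring

lemma Sof_conj (ha₁ : ContDiff ℝ (⊤:ℕ∞) a₁) (ha₂ : ContDiff ℝ (⊤:ℕ∞) a₂)
    (ha₃ : ContDiff ℝ (⊤:ℕ∞) a₃) (hg : ContDiff ℝ (⊤:ℕ∞) g) (p : V5) :
    𝐒 (fun q => conj (g q)) p = conj (𝐒b g p) := by
  have e1 : 𝐓 (fun q => conj (g q)) = fun q => conj (𝐓 g q) :=
    funext (Tof_conj ha₁ ha₂ ha₃ hg)
  have e2 : 𝐋 (fun q => conj (g q)) = fun q => conj (𝐋b g q) :=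
    funext (Lop_conj (diff_of_top hg))
  simp only [Sof, Sbof, e1, e2,
    Lop_conj (diff_of_top (contDiff_Tof ha₁ ha₂ ha₃ hg)),
    Tof_conj ha₁ ha₂ ha₃ (contDiff_Lbop ha₁ ha₂ ha₃ hg),
    map_sub]

lemma Sbof_conj (ha₁ : ContDiff ℝ (⊤:ℕ∞) a₁) (ha₂ : ContDiff ℝ (⊤:ℕ∞) a₂)
    (ha₃ : ContDiff ℝ (⊤:ℕ∞) a₃) (hg : ContDiff ℝ (⊤:ℕ∞) g) (p : V5) :
    𝐒b (fun q => conj (g q)) p = conj (𝐒 g p) := by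
  have e1 : 𝐓 (fun q => conj (g q)) = fun q => conj (𝐓 g q) :=
    funext (Tof_conj ha₁ ha₂ ha₃ hg)
  have e2 : 𝐋b (fun q => conj (g q)) = fun q => conj (𝐋 g q) :=
    funext (Lbop_conj (diff_of_top hg))
  simp only [Sof, Sbof, e1, e2,
    Lbop_conj (diff_of_top (contDiff_Tof ha₁ ha₂ ha₃ hg)),
    Tof_conj ha₁ ha₂ ha₃ (contDiff_Lop ha₁ ha₂ ha₃ hg),
    map_sub]

end AuxOps


/-- The paper's Lemma computing the coefficients `E, F, G` of `[T, S]` for General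
Class III₁: if `[L, S] = P·T + Q·S + R·S̄` and `[L̄, S] = A·T + B·S + B̄·S̄` with
`P, Q, R, A, B` of class `C¹`, then `[T, S] = E·T + F·S + G·S̄` where
`E = i(L(A) − L̄(P) + A B̄ + B P − A Q − P̄ R)`,
`F = i(L(B) − L̄(Q) + A + B B̄ − R R̄)`, and
`G = i(L(B̄) − L̄(R) + B̄² + B R − P − B̄ Q − R Q̄)`. -/
theorem class_III₁_bracket_TS
    (ha₁ : ContDiff ℝ (⊤ : ℕ∞) a₁) (ha₂ : ContDiff ℝ (⊤ : ℕ∞) a₂)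
    (ha₃ : ContDiff ℝ (⊤ : ℕ∞) a₃) (P Q R A B : V5 → ℂ)
    (hP : ContDiff ℝ 1 P) (hQ : ContDiff ℝ 1 Q) (hR : ContDiff ℝ 1 R)
    (hA : ContDiff ℝ 1 A) (hB : ContDiff ℝ 1 B)
    (hLS : ∀ f : V5 → ℂ, ContDiff ℝ (⊤ : ℕ∞) f → ∀ p,
        Lop a₁ a₂ a₃ (Sof a₁ a₂ a₃ f) p - Sof a₁ a₂ a₃ (Lop a₁ a₂ a₃ f) p
          = P p * Tof a₁ a₂ a₃ f p + Q p * Sof a₁ a₂ a₃ f p + R p * Sbof a₁ a₂ a₃ f p)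
    (hLbS : ∀ f : V5 → ℂ, ContDiff ℝ (⊤ : ℕ∞) f → ∀ p,
        Lbop a₁ a₂ a₃ (Sof a₁ a₂ a₃ f) p - Sof a₁ a₂ a₃ (Lbop a₁ a₂ a₃ f) p
          = A p * Tof a₁ a₂ a₃ f p + B p * Sof a₁ a₂ a₃ f p
            + conj (B p) * Sbof a₁ a₂ a₃ f p) :
    ∀ f : V5 → ℂ, ContDiff ℝ (⊤ : ℕ∞) f → ∀ p,
      Tof a₁ a₂ a₃ (Sof a₁ a₂ a₃ f) p - Sof a₁ a₂ a₃ (Tof a₁ a₂ a₃ f) p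
        = I * (Lop a₁ a₂ a₃ A p - Lbop a₁ a₂ a₃ P p + A p * conj (B p) + B p * P p
              - A p * Q p - conj (P p) * R p) * Tof a₁ a₂ a₃ f p
          + I * (Lop a₁ a₂ a₃ B p - Lbop a₁ a₂ a₃ Q p + A p + B p * conj (B p)
              - R p * conj (R p)) * Sof a₁ a₂ a₃ f p
          + I * (Lop a₁ a₂ a₃ (fun q => conj (B q)) p - Lbop a₁ a₂ a₃ R p
              + conj (B p) ^ 2 + B p * R p - P p - conj (B p) * Q p
              - R p * conj (Q p)) * Sbof a₁ a₂ a₃ f p := by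
  intro f hf p
  have hfd : Differentiable ℝ f := diff_of_top hf
  have c1 : ContDiff ℝ (⊤:ℕ∞) (𝐋 f) := contDiff_Lop ha₁ ha₂ ha₃ hf
  have c2 : ContDiff ℝ (⊤:ℕ∞) (𝐋b f) := contDiff_Lbop ha₁ ha₂ ha₃ hf
  have c3 : ContDiff ℝ (⊤:ℕ∞) (𝐓 f) := contDiff_Tof ha₁ ha₂ ha₃ hf
  have c4 : ContDiff ℝ (⊤:ℕ∞) (𝐒 f) := contDiff_Sof ha₁ ha₂ ha₃ hf
  have c5 : ContDiff ℝ (⊤:ℕ∞) (𝐒b f) := contDiff_Sbof ha₁ ha₂ ha₃ hf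
  have c6 : ContDiff ℝ (⊤:ℕ∞) (𝐋 (𝐋b f)) := contDiff_Lop ha₁ ha₂ ha₃ c2
  have c7 : ContDiff ℝ (⊤:ℕ∞) (𝐋b (𝐋 f)) := contDiff_Lbop ha₁ ha₂ ha₃ c1
  have c8 : ContDiff ℝ (⊤:ℕ∞) (𝐓 (𝐋 f)) := contDiff_Tof ha₁ ha₂ ha₃ c1
  have c9 : ContDiff ℝ (⊤:ℕ∞) (𝐓 (𝐋b f)) := contDiff_Tof ha₁ ha₂ ha₃ c2
  have c12 : ContDiff ℝ (⊤:ℕ∞) (𝐋b (𝐓 f)) := contDiff_Lbop ha₁ ha₂ ha₃ c3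
  have c13 : ContDiff ℝ (⊤:ℕ∞) (𝐋 (𝐓 f)) := contDiff_Lop ha₁ ha₂ ha₃ c3
  have c15 : ContDiff ℝ (⊤:ℕ∞) (𝐓 (𝐋 (𝐋b f))) := contDiff_Tof ha₁ ha₂ ha₃ c6
  have c16 : ContDiff ℝ (⊤:ℕ∞) (𝐓 (𝐋b (𝐋 f))) := contDiff_Tof ha₁ ha₂ ha₃ c7
  have hA' : Differentiable ℝ A := hA.differentiable one_ne_zero
  have hB' : Differentiable ℝ B := hB.differentiable one_ne_zero
  have hP' : Differentiable ℝ P := hP.differentiable one_ne_zero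
  have hQ' : Differentiable ℝ Q := hQ.differentiable one_ne_zero
  have hR' : Differentiable ℝ R := hR.differentiable one_ne_zero
  have hBc : Differentiable ℝ (fun q => conj (B q)) := diff_conj hB'
  -- structural identities
  have E1 : 𝐋 (𝐓 f) = fun q => 𝐒 f q + 𝐓 (𝐋 f) q := funext fun q => by
    simp only [Sof]; ring
  have E2 : 𝐋b (𝐓 f) = fun q => 𝐒b f q + 𝐓 (𝐋b f) q := funext fun q => by
    simp only [Sbof]; ring
  have E3 : 𝐋 (𝐒 f) = fun q => 𝐒 (𝐋 f) q + P q * 𝐓 f q + Q q * 𝐒 f q + R q * 𝐒b f q :=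
    funext fun q => by linear_combination hLS f hf q
  have E4 : 𝐋b (𝐒 f) = fun q => 𝐒 (𝐋b f) q + A q * 𝐓 f q + B q * 𝐒 f q
      + conj (B q) * 𝐒b f q :=
    funext fun q => by linear_combination hLbS f hf q
  have Eg : 𝐋b (𝐋 f) = fun r => 𝐋 (𝐋b f) r + I * 𝐓 f r := funext fun r => by
    have h1 : 𝐓 f r = I * (𝐋 (𝐋b f) r - 𝐋b (𝐋 f) r) := rfl
    have h2 : I * 𝐓 f r = 𝐋b (𝐋 f) r - 𝐋 (𝐋b f) r := by
      rw [h1, ← mul_assoc, Complex.I_mul_I]; ring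
    linear_combination -h2
  have E5 : 𝐋 (𝐒b f) = fun q => 𝐒b (𝐋 f) q + A q * 𝐓 f q + B q * 𝐒 f q
      + conj (B q) * 𝐒b f q := by
    funext q
    have k0 : 𝐒b f = fun r => 𝐋b (𝐓 f) r - 𝐓 (𝐋b f) r := rfl
    have k1 : 𝐋 (𝐒b f) q = 𝐋 (𝐋b (𝐓 f)) q - 𝐋 (𝐓 (𝐋b f)) q := by
      conv_lhs => rw [k0]
      exact Lop_sub (diff_of_top c12) (diff_of_top c9) q
    have k2 : 𝐋 (𝐓 (𝐋b f)) q = 𝐒 (𝐋b f) q + 𝐓 (𝐋 (𝐋b f)) q := by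
      simp only [Sof]; ring
    have k3 : 𝐋 (𝐋b (𝐓 f)) q = 𝐋b (𝐋 (𝐓 f)) q - I * 𝐓 (𝐓 f) q := by
      have h1 : 𝐓 (𝐓 f) q = I * (𝐋 (𝐋b (𝐓 f)) q - 𝐋b (𝐋 (𝐓 f)) q) := rfl
      have h2 : I * 𝐓 (𝐓 f) q = 𝐋b (𝐋 (𝐓 f)) q - 𝐋 (𝐋b (𝐓 f)) q := by
        rw [h1, ← mul_assoc, Complex.I_mul_I]; ring
      linear_combination h2
    have k4 : 𝐋b (𝐋 (𝐓 f)) q = 𝐋b (𝐒 f) q + 𝐋b (𝐓 (𝐋 f)) q := by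
      rw [E1]; exact Lbop_add (diff_of_top c4) (diff_of_top c8) q
    have k5 : 𝐋b (𝐓 (𝐋 f)) q = 𝐒b (𝐋 f) q + 𝐓 (𝐋b (𝐋 f)) q := by
      simp only [Sbof]; ring
    have k6 : 𝐓 (𝐋b (𝐋 f)) q = 𝐓 (𝐋 (𝐋b f)) q + I * 𝐓 (𝐓 f) q := by
      rw [Eg]; exact Tof_comb2 ha₁ ha₂ ha₃ I c6 c3 q
    have k7 := congrFun E4 q
    linear_combination k1 + k3 + k4 + k5 + k6 + k7 - k2
  have cc : ContDiff ℝ (⊤:ℕ∞) (fun x => conj (f x)) := contDiff_conj hf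
  have E6 : 𝐋b (𝐒b f) = fun q => 𝐒b (𝐋b f) q + conj (P q) * 𝐓 f q + conj (Q q) * 𝐒b f q
      + conj (R q) * 𝐒 f q := by
    funext q
    have m0 : 𝐒b f = fun r => conj (𝐒 (fun x => conj (f x)) r) := by
      funext r
      rw [Sof_conj ha₁ ha₂ ha₃ hf r, conj_conj]
    have m1 : 𝐋b (𝐒b f) q = conj (𝐋 (𝐒 (fun x => conj (f x))) q) := by
      conv_lhs => rw [m0]
      exact Lbop_conj (diff_of_top (contDiff_Sof ha₁ ha₂ ha₃ cc)) q
    have m2 := hLS (fun x => conj (f x)) cc q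
    have m3 : 𝐋 (fun x => conj (f x)) = fun r => conj (𝐋b f r) := funext (Lop_conj hfd)
    have m4 : 𝐒 (𝐋 (fun x => conj (f x))) q = conj (𝐒b (𝐋b f) q) := by
      rw [m3]; exact Sof_conj ha₁ ha₂ ha₃ c2 q
    have m5 : 𝐓 (fun x => conj (f x)) q = conj (𝐓 f q) := Tof_conj ha₁ ha₂ ha₃ hf q
    have m6 : 𝐒 (fun x => conj (f x)) q = conj (𝐒b f q) := Sof_conj ha₁ ha₂ ha₃ hf q
    have m7 : 𝐒b (fun x => conj (f x)) q = conj (𝐒 f q) := Sbof_conj ha₁ ha₂ ha₃ hf q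
    have m8 : 𝐋 (𝐒 (fun x => conj (f x))) q
        = conj (𝐒b (𝐋b f) q) + P q * conj (𝐓 f q) + Q q * conj (𝐒b f q)
          + R q * conj (𝐒 f q) := by
      linear_combination m2 + m4 + P q * m5 + Q q * m6 + R q * m7
    rw [m1, m8]
    simp only [map_add, map_mul, conj_conj]
    try ring
  -- the second-order reduction of `S (T f)`
  have n2 : 𝐓 (𝐓 f) = fun q => I * 𝐓 (𝐋 (𝐋b f)) q + (-I) * 𝐓 (𝐋b (𝐋 f)) q := by
    funext q
    have u0 : 𝐓 (𝐓 f) q = I * (𝐋 (𝐋b (𝐓 f)) q - 𝐋b (𝐋 (𝐓 f)) q) := rfl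
    have u1 : 𝐋 (𝐋b (𝐓 f)) q = 𝐋 (𝐒b f) q + 𝐋 (𝐓 (𝐋b f)) q := by
      rw [E2]; exact Lop_add (diff_of_top c5) (diff_of_top c9) q
    have u2 : 𝐋b (𝐋 (𝐓 f)) q = 𝐋b (𝐒 f) q + 𝐋b (𝐓 (𝐋 f)) q := by
      rw [E1]; exact Lbop_add (diff_of_top c4) (diff_of_top c8) q
    have u3 : 𝐋 (𝐓 (𝐋b f)) q = 𝐒 (𝐋b f) q + 𝐓 (𝐋 (𝐋b f)) q := by simp only [Sof]; ring
    have u4 : 𝐋b (𝐓 (𝐋 f)) q = 𝐒b (𝐋 f) q + 𝐓 (𝐋b (𝐋 f)) q := by simp only [Sbof]; ring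
    have u5 := congrFun E5 q
    have u6 := congrFun E4 q
    linear_combination u0 + I * (u1 - u2 + u3 - u4 + u5 - u6)
  have n6 : 𝐋 (𝐋b (𝐋 f)) = fun q => 𝐋 (𝐋 (𝐋b f)) q + I * 𝐋 (𝐓 f) q := by
    funext q
    rw [Eg]
    exact Lop_comb2 I (diff_of_top c6) (diff_of_top c3) q
  have n7a : 𝐓 (𝐋 (𝐋b (𝐋 f))) p = 𝐓 (𝐋 (𝐋 (𝐋b f))) p + I * 𝐓 (𝐋 (𝐓 f)) p := by
    rw [n6]; exact Tof_comb2 ha₁ ha₂ ha₃ I (contDiff_Lop ha₁ ha₂ ha₃ c6) c13 p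
  have n1 : 𝐓 (𝐋 (𝐓 f)) p = 𝐓 (𝐒 f) p + 𝐓 (𝐓 (𝐋 f)) p := by
    rw [E1]; exact Tof_add ha₁ ha₂ ha₃ c4 c8 p
  have n0 : 𝐒 (𝐓 f) p = 𝐋 (𝐓 (𝐓 f)) p - 𝐓 (𝐋 (𝐓 f)) p := rfl
  have n3 : 𝐋 (𝐓 (𝐓 f)) p = I * 𝐋 (𝐓 (𝐋 (𝐋b f))) p + (-I) * 𝐋 (𝐓 (𝐋b (𝐋 f))) p := by
    rw [n2]; exact Lop_comb2' I (-I) (diff_of_top c15) (diff_of_top c16) p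
  have n4 : 𝐋 (𝐓 (𝐋 (𝐋b f))) p = 𝐒 (𝐋 (𝐋b f)) p + 𝐓 (𝐋 (𝐋 (𝐋b f))) p := by
    simp only [Sof]; ring
  have n5 : 𝐋 (𝐓 (𝐋b (𝐋 f))) p = 𝐒 (𝐋b (𝐋 f)) p + 𝐓 (𝐋 (𝐋b (𝐋 f))) p := by
    simp only [Sof]; ring
  have hSt : 𝐒 (𝐓 f) p = I * (𝐒 (𝐋 (𝐋b f)) p - 𝐒 (𝐋b (𝐋 f)) p) := by
    linear_combination n0 + n3 + I * n4 - I * n5 - I * n7a - (1 + I*I) * n1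
      - (𝐓 (𝐒 f) p + 𝐓 (𝐓 (𝐋 f)) p) * Complex.I_mul_I
  -- expansion of `T (S f)`
  have hTs : 𝐓 (𝐒 f) p = I * (𝐋 (𝐋b (𝐒 f)) p - 𝐋b (𝐋 (𝐒 f)) p) := rfl
  have w1 : 𝐋 (𝐋b (𝐒 f)) p
      = (𝐒 (𝐋 (𝐋b f)) p + P p * 𝐓 (𝐋b f) p + Q p * 𝐒 (𝐋b f) p + R p * 𝐒b (𝐋b f) p)
        + (𝐋 A p * 𝐓 f p + A p * (𝐒 f p + 𝐓 (𝐋 f) p))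
        + (𝐋 B p * 𝐒 f p + B p * (𝐒 (𝐋 f) p + P p * 𝐓 f p + Q p * 𝐒 f p + R p * 𝐒b f p))
        + (𝐋 (fun q => conj (B q)) p * 𝐒b f p
            + conj (B p) * (𝐒b (𝐋 f) p + A p * 𝐓 f p + B p * 𝐒 f p
              + conj (B p) * 𝐒b f p)) := by
    rw [E4]
    linear_combination Lop_comb4 (diff_of_top (contDiff_Sof ha₁ ha₂ ha₃ c2)) hA'
        (diff_of_top c3) hB' (diff_of_top c4) hBc (diff_of_top c5) p
      + hLS (𝐋b f) c2 p + A p * congrFun E1 p + B p * congrFun E3 p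
      + conj (B p) * congrFun E5 p
  have w2 : 𝐋b (𝐋 (𝐒 f)) p
      = (𝐒 (𝐋b (𝐋 f)) p + A p * 𝐓 (𝐋 f) p + B p * 𝐒 (𝐋 f) p + conj (B p) * 𝐒b (𝐋 f) p)
        + (𝐋b P p * 𝐓 f p + P p * (𝐒b f p + 𝐓 (𝐋b f) p))
        + (𝐋b Q p * 𝐒 f p + Q p * (𝐒 (𝐋b f) p + A p * 𝐓 f p + B p * 𝐒 f p
            + conj (B p) * 𝐒b f p))
        + (𝐋b R p * 𝐒b f p + R p * (𝐒b (𝐋b f) p + conj (P p) * 𝐓 f p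
            + conj (Q p) * 𝐒b f p + conj (R p) * 𝐒 f p)) := by
    rw [E3]
    linear_combination Lbop_comb4 (diff_of_top (contDiff_Sof ha₁ ha₂ ha₃ c1)) hP'
        (diff_of_top c3) hQ' (diff_of_top c4) hR' (diff_of_top c5) p
      + hLbS (𝐋 f) c1 p + P p * congrFun E2 p + Q p * congrFun E4 p
      + R p * congrFun E6 p
  linear_combination hTs + I * w1 - I * w2 - hSt

end
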